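/- Let h : ℝˡ → ℝ be continuous and strictly positive, and suppose that for some d ∈ ℕ and some continuous function f : [0,∞) → ℝ with f(0) > 0 and f''(0) < 0 (f twice differentiable at 0, f'(0) = 0), the functions t ↦ f(γ√(h(t)))/f(0) are positive definite on ℝˡ for all γ > 0. Then e^{-λ h(t)} is positive definite on ℝˡ for every λ > 0. -/

import Mathlib

open scoped BigOperators ComplexOrder

def IsPosDef {V : Type*} [AddCommGroup V] (f : V → ℂ) : Prop :=
  ∀ (m : ℕ) (ξ : Fin m → V) (a : Fin m → ℂ),
    0 ≤ ∑ i, ∑ j, a i * f (ξ i - ξ j) * (starRingEnd ℂ) (a j)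

def CompletelyMonotone (φ : ℝ → ℝ) : Prop :=
  ∀ (k : ℕ) (x : ℝ), 0 < x → 0 ≤ (-1 : ℝ) ^ k * iteratedDeriv k φ x

open Filter Topology

/-- A positive definite function is Hermitian. -/
lemma IsPosDef.herm {V : Type*} [AddCommGroup V] {φ : V → ℂ} (hφ : IsPosDef φ) (v : V) :
    φ (-v) = (starRingEnd ℂ) (φ v) := by
  have h0 := hφ 1 (fun _ => 0) (fun _ => 1)
  have h1 := hφ 2 ![v, 0] ![1, 1]
  have h2 := hφ 2 ![v, 0] ![1, Complex.I]
  simp only [Fin.sum_univ_one, Fin.sum_univ_two, Matrix.cons_val_zero, Matrix.cons_val_one,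
    Matrix.head_cons, sub_self, sub_zero, zero_sub, one_mul, mul_one, map_one] at h0 h1 h2
  rw [Complex.le_def] at h0 h1 h2
  have him0 : (φ 0).im = 0 := by simpa using h0.2.symm
  have h1' := h1.2.symm
  have h2' := h2.2.symm
  simp only [Complex.add_im, Complex.mul_im, Complex.conj_re, Complex.conj_im,
    Complex.I_re, Complex.I_im, Complex.mul_re, Complex.zero_im] at h1' h2'
  apply Complex.ext <;>
    simp only [Complex.conj_re, Complex.conj_im] <;> nlinarith [h1', h2', him0]

/-- The product of positive definite functions is positive definite (Schur). -/
lemma IsPosDef.mul {V : Type*} [AddCommGroup V] {φ ψ : V → ℂ} (hφ : IsPosDef φ)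
    (hψ : IsPosDef ψ) : IsPosDef (fun v => φ v * ψ v) := by
  intro m ξ a
  set M : Matrix (Fin m) (Fin m) ℂ := Matrix.of fun i j => ψ (ξ i - ξ j) with hMdef
  have hM : M.PosSemidef := by
    refine Matrix.PosSemidef.of_dotProduct_mulVec_nonneg ?_ ?_
    · ext i j
      have hneg : ξ j - ξ i = -(ξ i - ξ j) := by abel
      simp only [Matrix.conjTranspose_apply, hMdef, Matrix.of_apply, hneg, hψ.herm]
      simp [RCLike.star_def]
    · intro x
      have hsum := hψ m ξ (star x)
      calc (0:ℂ) ≤ ∑ i, ∑ j, star x i * ψ (ξ i - ξ j) * (starRingEnd ℂ) (star x j) := hsum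
        _ = dotProduct (star x) (Matrix.mulVec M x) := by
            simp only [dotProduct, Matrix.mulVec, dotProduct, Finset.mul_sum,
              hMdef, Matrix.of_apply, Pi.star_apply]
            refine Finset.sum_congr rfl fun i _ => Finset.sum_congr rfl fun j _ => ?_
            simp only [RCLike.star_def, Complex.conj_conj]
            ring
  open scoped MatrixOrder in
  obtain ⟨B, hB⟩ := CStarAlgebra.nonneg_iff_eq_star_mul_self.mp hM.nonneg
  have key : ∀ i j, ψ (ξ i - ξ j) = ∑ k, (starRingEnd ℂ) (B k i) * B k j := by
    intro i j
    have := congrArg (fun N => N i j) hB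
    simpa [hMdef, Matrix.mul_apply, Matrix.star_eq_conjTranspose, Matrix.conjTranspose_apply, RCLike.star_def] using this
  have rearr : (∑ i, ∑ j, a i * (φ (ξ i - ξ j) * ψ (ξ i - ξ j)) * (starRingEnd ℂ) (a j))
      = ∑ k, ∑ i, ∑ j, (a i * (starRingEnd ℂ) (B k i)) * φ (ξ i - ξ j) *
          (starRingEnd ℂ) (a j * (starRingEnd ℂ) (B k j)) := by
    have hterm : ∀ i j, a i * (φ (ξ i - ξ j) * ψ (ξ i - ξ j)) * (starRingEnd ℂ) (a j)
        = ∑ k, (a i * (starRingEnd ℂ) (B k i)) * φ (ξ i - ξ j) *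
            (starRingEnd ℂ) (a j * (starRingEnd ℂ) (B k j)) := by
      intro i j
      rw [key i j, Finset.mul_sum, Finset.mul_sum, Finset.sum_mul]
      refine Finset.sum_congr rfl fun k _ => ?_
      simp only [map_mul, Complex.conj_conj]
      ring
    simp_rw [hterm]
    exact (Finset.sum_congr rfl fun i _ => Finset.sum_comm).trans Finset.sum_comm
  rw [rearr]
  exact Finset.sum_nonneg fun k _ => hφ m ξ (fun i => a i * (starRingEnd ℂ) (B k i))

lemma IsPosDef.pow {V : Type*} [AddCommGroup V] {φ : V → ℂ} (hφ : IsPosDef φ) :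
    ∀ n : ℕ, 1 ≤ n → IsPosDef (fun v => φ v ^ n) := by
  intro n hn
  induction n with
  | zero => omega
  | succ k ih =>
    rcases Nat.eq_zero_or_pos k with rfl | hk
    · simpa using hφ
    · have := hφ.mul (ih hk)
      simpa [pow_succ, mul_comm] using this

/-- Pointwise limits of positive definite functions are positive definite. -/
lemma isPosDef_of_tendsto {V : Type*} [AddCommGroup V] {φ : ℕ → V → ℂ} {ψ : V → ℂ}
    (hφ : ∀ᶠ n in atTop, IsPosDef (φ n))
    (hlim : ∀ v, Tendsto (fun n => φ n v) atTop (𝓝 (ψ v))) : IsPosDef ψ := by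
  intro m ξ a
  have hT : Tendsto (fun n => ∑ i, ∑ j, a i * φ n (ξ i - ξ j) * (starRingEnd ℂ) (a j)) atTop
      (𝓝 (∑ i, ∑ j, a i * ψ (ξ i - ξ j) * (starRingEnd ℂ) (a j))) := by
    refine tendsto_finset_sum _ fun i _ => tendsto_finset_sum _ fun j _ => ?_
    exact (((hlim _).const_mul _).mul_const _)
  exact ge_of_tendsto hT (hφ.mono fun n hn => hn m ξ a)

/-- If `n * (a n - 1) → c` then `a n ^ n → exp c`. -/
lemma tendsto_pow_exp_of_mul_sub_one {a : ℕ → ℝ} {c : ℝ}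
    (h1 : Tendsto (fun n : ℕ => (n : ℝ) * (a n - 1)) atTop (𝓝 c)) :
    Tendsto (fun n => a n ^ n) atTop (𝓝 (Real.exp c)) := by
  have hinv : Tendsto (fun n : ℕ => (1 : ℝ) / n) atTop (𝓝 0) :=
    tendsto_one_div_atTop_nhds_zero_nat
  have ha1 : Tendsto (fun n => a n - 1) atTop (𝓝 0) := by
    have h2 := h1.mul hinv
    rw [mul_zero] at h2
    refine h2.congr' ?_
    filter_upwards [eventually_gt_atTop (0:ℕ)] with n hn
    have : (n:ℝ) ≠ 0 := Nat.cast_ne_zero.mpr hn.ne'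
    field_simp
  have ha : Tendsto a atTop (𝓝 1) := by
    have := ha1.add_const 1
    simpa using this
  have hpos : ∀ᶠ n in atTop, (1:ℝ)/2 < a n :=
    ha.eventually (eventually_gt_nhds (by norm_num))
  have hd0 : Tendsto (fun n : ℕ => (n : ℝ) * ((a n - 1) - Real.log (a n))) atTop (𝓝 0) := by
    have hub : Tendsto (fun n : ℕ => ((n : ℝ) * (a n - 1)) * ((a n - 1) / a n)) atTop (𝓝 0) := by
      have h2 : Tendsto (fun n => (a n - 1) / a n) atTop (𝓝 0) := by
        have := ha1.div ha one_ne_zero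
        rw [zero_div] at this
        exact this
      have := h1.mul h2
      simpa using this
    refine squeeze_zero' ?_ ?_ hub
    · filter_upwards [hpos] with n hn
      have hapos : 0 < a n := by linarith
      have hlog := Real.log_le_sub_one_of_pos hapos
      have hn0 : (0:ℝ) ≤ (n:ℝ) := Nat.cast_nonneg n
      nlinarith
    · filter_upwards [hpos] with n hn
      have hapos : 0 < a n := by linarith
      have hlog : 1 - (a n)⁻¹ ≤ Real.log (a n) := Real.one_sub_inv_le_log_of_pos hapos
      have key : (a n - 1) - Real.log (a n) ≤ (a n - 1) * ((a n - 1) / a n) := by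
        have heq : (a n - 1) - (1 - (a n)⁻¹) = (a n - 1) * ((a n - 1) / a n) := by
          field_simp
        nlinarith [hlog]
      have hn0 : (0:ℝ) ≤ (n:ℝ) := Nat.cast_nonneg n
      calc (n : ℝ) * ((a n - 1) - Real.log (a n))
          ≤ (n:ℝ) * ((a n - 1) * ((a n - 1) / a n)) := mul_le_mul_of_nonneg_left key hn0
        _ = ((n : ℝ) * (a n - 1)) * ((a n - 1) / a n) := by ring
  have hlogT : Tendsto (fun n : ℕ => (n : ℝ) * Real.log (a n)) atTop (𝓝 c) := by
    have h3 := h1.sub hd0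
    rw [sub_zero] at h3
    refine h3.congr (fun n => by ring)
  have h4 := (Real.continuous_exp.tendsto c).comp hlogT
  refine h4.congr' ?_
  filter_upwards [hpos] with n hn
  have hapos : 0 < a n := by linarith
  simp only [Function.comp_apply]
  rw [Real.exp_nat_mul, Real.exp_log hapos]

theorem stmt_18 {l : ℕ} (h : (Fin l → ℝ) → ℝ) (hc : Continuous h) (hpos : ∀ t, 0 < h t)
    (f : ℝ → ℝ) (hfc : ContinuousOn f (Set.Ici 0)) (hf0 : 0 < f 0)
    (hf2 : ContDiffAt ℝ 2 f 0) (hf1 : deriv f 0 = 0)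
    (hf2neg : iteratedDeriv 2 f 0 < 0)
    (hpd : ∀ γ : ℝ, 0 < γ →
      IsPosDef (fun t : Fin l → ℝ => ((f (γ * Real.sqrt (h t)) / f 0 : ℝ) : ℂ))) :
    ∀ lam : ℝ, 0 < lam → IsPosDef (fun t => (Real.exp (-(lam * h t)) : ℂ)) := by
  intro lam hlam
  set D := iteratedDeriv 2 f 0 with hDdef
  have hDneg : D < 0 := hf2neg
  set C : ℝ := 2 * f 0 * lam / (-D) with hCdef
  have hCpos : 0 < C := div_pos (by positivity) (by linarith)
  set γ : ℕ → ℝ := fun n => Real.sqrt (C / n) with hγdef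
  -- Second-order Taylor quotient via L'Hôpital
  have hA : Tendsto (fun x => (f x - f 0) / x ^ 2) (𝓝[>] (0:ℝ)) (𝓝 (D / 2)) := by
    obtain ⟨u, hu, hcd⟩ := hf2.contDiffOn le_rfl (by simp)
    obtain ⟨v, hvu, hvopen, hv0⟩ := mem_nhds_iff.mp hu
    have hcdv : ContDiffOn ℝ 2 f v := hcd.mono hvu
    have h2eq : (2 : WithTop ℕ∞) = 1 + 1 := by norm_num
    rw [h2eq, contDiffOn_succ_iff_deriv_of_isOpen hvopen] at hcdv
    obtain ⟨hfdiff, -, hf'cd⟩ := hcdv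
    have hvnhds : v ∈ 𝓝 (0:ℝ) := hvopen.mem_nhds hv0
    have hderderiv : HasDerivAt (deriv f) D 0 := by
      have hdiff : DifferentiableAt ℝ (deriv f) 0 := by
        have := (hf'cd 0 hv0).differentiableWithinAt (by norm_num)
        exact this.differentiableAt hvnhds
      have heq : deriv (deriv f) 0 = D := by
        rw [hDdef, iteratedDeriv_succ, iteratedDeriv_one]
      exact heq ▸ hdiff.hasDerivAt
    have hslope : Tendsto (fun y : ℝ => deriv f y / y) (𝓝[>] (0:ℝ)) (𝓝 D) := by
      have hs := hasDerivAt_iff_tendsto_slope.mp hderderiv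
      have hmono : 𝓝[>] (0:ℝ) ≤ 𝓝[≠] (0:ℝ) :=
        nhdsWithin_mono 0 (fun x hx => ne_of_gt hx)
      refine (hs.mono_left hmono).congr fun y => ?_
      simp [slope, hf1, div_eq_inv_mul]
    refine deriv.lhopital_zero_nhdsGT ?_ ?_ ?_ ?_ ?_
    · -- eventual differentiability of fun x => f x - f 0
      filter_upwards [nhdsWithin_le_nhds hvnhds] with x hx
      exact ((hfdiff x hx).differentiableAt (hvopen.mem_nhds hx)).sub_const _
    · -- deriv of x^2 nonzero
      filter_upwards [self_mem_nhdsWithin] with x hx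
      have : deriv (fun y : ℝ => y ^ 2) x = 2 * x := by
        simp [deriv_pow]
      rw [this]
      have hx' : (0:ℝ) < x := hx
      exact (mul_pos two_pos hx').ne'
    · have h5 : Tendsto f (𝓝[>] (0:ℝ)) (𝓝 (f 0)) :=
        hf2.continuousAt.tendsto.mono_left nhdsWithin_le_nhds
      simpa using h5.sub_const (f 0)
    · have h6 : Tendsto (fun y : ℝ => y ^ 2) (𝓝[>] (0:ℝ)) (𝓝 ((0:ℝ) ^ 2)) :=
        ((continuous_pow 2).tendsto (0:ℝ)).mono_left nhdsWithin_le_nhds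
      simpa using h6
    · have hder2 : ∀ᶠ x in 𝓝[>] (0:ℝ),
          deriv (fun y => f y - f 0) x / deriv (fun y : ℝ => y ^ 2) x
            = (deriv f x / x) / 2 := by
        filter_upwards [self_mem_nhdsWithin] with x hx
        have hx0 : x ≠ 0 := ne_of_gt hx
        have hd2 : deriv (fun y : ℝ => y ^ 2) x = 2 * x := by simp [deriv_pow]
        rw [deriv_sub_const, hd2]
        rw [div_div]
        ring_nf
      have := hslope.div_const 2
      exact (this.congr' (hder2.mono fun x hx => hx.symm))
  -- the key pointwise limit
  have hkey : ∀ t : Fin l → ℝ,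
      Tendsto (fun n : ℕ => (f (γ n * Real.sqrt (h t)) / f 0) ^ n) atTop
        (𝓝 (Real.exp (-(lam * h t)))) := by
    intro t
    set s : ℝ := Real.sqrt (h t) with hsdef
    have hs : 0 < s := Real.sqrt_pos.mpr (hpos t)
    set x : ℕ → ℝ := fun n => γ n * s with hxdef
    have hγ0 : Tendsto γ atTop (𝓝 0) := by
      have h6 : Tendsto (fun n : ℕ => C / n) atTop (𝓝 0) :=
        tendsto_const_div_atTop_nhds_zero_nat C
      have h7 := (Real.continuous_sqrt.tendsto 0).comp h6
      rw [Real.sqrt_zero] at h7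
      exact h7
    have hγpos : ∀ n : ℕ, 1 ≤ n → 0 < γ n := fun n hn =>
      Real.sqrt_pos.mpr (div_pos hCpos (by exact_mod_cast Nat.pos_of_ne_zero (by omega)))
    have hx0 : Tendsto x atTop (𝓝[>] 0) := by
      rw [tendsto_nhdsWithin_iff]
      constructor
      · have h8 := hγ0.mul_const s
        rw [zero_mul] at h8
        exact h8
      · filter_upwards [eventually_ge_atTop 1] with n hn
        exact mul_pos (hγpos n hn) hs
    have hq : Tendsto (fun n => (f (x n) - f 0) / (x n) ^ 2) atTop (𝓝 (D / 2)) :=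
      hA.comp hx0
    have hnx2 : ∀ n : ℕ, 1 ≤ n → (n : ℝ) * (x n) ^ 2 = C * h t := by
      intro n hn
      have hn0 : (n:ℝ) ≠ 0 := Nat.cast_ne_zero.mpr (by omega)
      have hγsq : (γ n) ^ 2 = C / n :=
        Real.sq_sqrt (div_nonneg hCpos.le (Nat.cast_nonneg n))
      have hssq : s ^ 2 = h t := Real.sq_sqrt (hpos t).le
      rw [hxdef]
      simp only [mul_pow, hγsq, hssq]
      field_simp
    have h1 : Tendsto (fun n : ℕ => (n : ℝ) * (f (γ n * s) / f 0 - 1)) atTop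
        (𝓝 (-(lam * h t))) := by
      have hlim := hq.mul_const (C * h t / f 0)
      have hval : D / 2 * (C * h t / f 0) = -(lam * h t) := by
        have hD0 : D ≠ 0 := ne_of_lt hDneg
        have hf0' : f 0 ≠ 0 := ne_of_gt hf0
        rw [hCdef]
        field_simp
      rw [hval] at hlim
      refine hlim.congr' ?_
      filter_upwards [eventually_ge_atTop 1] with n hn
      have hxpos : 0 < x n := mul_pos (hγpos n hn) hs
      have hxne : (x n) ^ 2 ≠ 0 := by positivity
      have hf0ne : f 0 ≠ 0 := ne_of_gt hf0
      have := hnx2 n hn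
      have hrw : (n : ℝ) * (f (γ n * s) / f 0 - 1)
          = (f (x n) - f 0) / (x n) ^ 2 * (((n:ℝ) * (x n)^2) / f 0) := by
        rw [hxdef]
        field_simp
        ring_nf
        field_simp [(hγpos n hn).ne']
      rw [hrw, this]
    exact tendsto_pow_exp_of_mul_sub_one h1
  -- assemble
  refine isPosDef_of_tendsto
    (φ := fun n t => ((f (γ n * Real.sqrt (h t)) / f 0 : ℝ) : ℂ) ^ n) ?_ ?_
  · filter_upwards [eventually_ge_atTop 1] with n hn
    have hγpos : 0 < γ n :=
      Real.sqrt_pos.mpr (div_pos hCpos (by exact_mod_cast Nat.pos_of_ne_zero (by omega)))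
    exact (hpd (γ n) hγpos).pow n hn
  · intro t
    have := (Complex.continuous_ofReal.tendsto _).comp (hkey t)
    refine this.congr fun n => ?_
    simp [Function.comp, Complex.ofReal_pow]
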